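/- Let D₁, D₂ ⊆ ℝⁿ be compact convex sets with nonempty interior such that D₁ ⊆ int D₂. Let ψ : D₁ → ℝ be a convex function that is constant on the boundary of D₁ and satisfies Stp(ψ) < +∞. Then there exists a convex function ψ̃ : D₂ → ℝ such that (i) ψ̃ restricted to D₁ equals ψ; (ii) ψ̃ is constant on the boundary of D₂; and (iii) Stp(ψ̃) < +∞. -/

import Mathlib

set_option maxHeartbeats 1000000 in
/-- extension of a boundary-constant convex function of finite steepness from D₁ to D₂. -/
theorem statement_14 (n : ℕ) (hn : 1 ≤ n)
    (D₁ D₂ : Set (EuclideanSpace ℝ (Fin n)))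
    (hD₁cpt : IsCompact D₁) (hD₁conv : Convex ℝ D₁) (hD₁int : (interior D₁).Nonempty)
    (hD₂cpt : IsCompact D₂) (hD₂conv : Convex ℝ D₂) (hD₂int : (interior D₂).Nonempty)
    (htop : D₁ ⊆ interior D₂)
    (ψ : EuclideanSpace ℝ (Fin n) → ℝ) (hψ_conv : ConvexOn ℝ D₁ ψ)
    -- ψ is constant on the boundary of D₁
    (c : ℝ) (hconst : ∀ x ∈ frontier D₁, ψ x = c)
    -- Stp(ψ) < +∞ on D₁
    (M : ℝ) (hM : 0 ≤ M) (hstp : ∀ u ∈ D₁, ∀ v ∈ D₁, |ψ v - ψ u| ≤ M * ‖v - u‖) :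
    ∃ ψt : EuclideanSpace ℝ (Fin n) → ℝ, ConvexOn ℝ D₂ ψt ∧
      (∀ x ∈ D₁, ψt x = ψ x) ∧
      (∃ c₂ : ℝ, ∀ x ∈ frontier D₂, ψt x = c₂) ∧
      (∃ M' : ℝ, 0 ≤ M' ∧ ∀ u ∈ D₂, ∀ v ∈ D₂, |ψt v - ψt u| ≤ M' * ‖v - u‖) := by
  classical
  obtain ⟨x₀, hx₀i⟩ := hD₁int
  have hx₀D₁ : x₀ ∈ D₁ := interior_subset hx₀i
  have hD₁ne : D₁.Nonempty := ⟨x₀, hx₀D₁⟩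
  haveI : Nonempty D₁ := hD₁ne.to_subtype
  have hD₁sub₂ : D₁ ⊆ D₂ := htop.trans interior_subset
  -- the Lipschitz convex extension of ψ to all of ℝⁿ
  set F : EuclideanSpace ℝ (Fin n) → D₁ → ℝ :=
    fun x u => ψ u + M * ‖x - (u : EuclideanSpace ℝ (Fin n))‖ with hF
  have hFbdd : ∀ x, BddBelow (Set.range (F x)) := by
    intro x
    refine ⟨ψ x₀ - M * ‖x - x₀‖, ?_⟩
    rintro _ ⟨u, rfl⟩
    have h1 : ψ x₀ - ψ u ≤ M * ‖x₀ - (u : EuclideanSpace ℝ (Fin n))‖ :=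
      (abs_le.1 (hstp u u.2 x₀ hx₀D₁)).2
    have h2 : ‖x₀ - (u : EuclideanSpace ℝ (Fin n))‖ ≤ ‖x₀ - x‖ + ‖x - u‖ :=
      norm_sub_le_norm_sub_add_norm_sub _ _ _
    have h3 : M * ‖x₀ - (u : EuclideanSpace ℝ (Fin n))‖ ≤ M * (‖x₀ - x‖ + ‖x - u‖) :=
      mul_le_mul_of_nonneg_left h2 hM
    have h4 : ‖x₀ - x‖ = ‖x - x₀‖ := norm_sub_rev _ _
    simp only [F]
    nlinarith [h1, h3]
  set ψh : EuclideanSpace ℝ (Fin n) → ℝ := fun x => ⨅ u : D₁, F x u with hψh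
  have hψh_le : ∀ x (u : D₁), ψh x ≤ F x u := fun x u => ciInf_le (hFbdd x) u
  have hle_ψh : ∀ x b, (∀ u : D₁, b ≤ F x u) → b ≤ ψh x := fun x b h => le_ciInf h
  -- ψh = ψ on D₁
  have hψh_eq : ∀ x ∈ D₁, ψh x = ψ x := by
    intro x hx
    refine le_antisymm ?_ ?_
    · have := hψh_le x ⟨x, hx⟩
      simpa [F] using this
    · refine hle_ψh x _ fun u => ?_
      have h1 : ψ x - ψ u ≤ M * ‖x - (u : EuclideanSpace ℝ (Fin n))‖ :=
        (abs_le.1 (hstp u u.2 x hx)).2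
      simp only [F]; linarith
  -- ψh is M-Lipschitz
  have hψh_lip : ∀ x y, ψh x ≤ ψh y + M * ‖x - y‖ := by
    intro x y
    have : ψh x - M * ‖x - y‖ ≤ ψh y := by
      refine hle_ψh y _ fun u => ?_
      have h1 : ψh x ≤ F x u := hψh_le x u
      have h2 : ‖x - (u : EuclideanSpace ℝ (Fin n))‖ ≤ ‖x - y‖ + ‖y - u‖ :=
        norm_sub_le_norm_sub_add_norm_sub _ _ _
      have h3 : M * ‖x - (u : EuclideanSpace ℝ (Fin n))‖ ≤ M * (‖x - y‖ + ‖y - u‖) :=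
        mul_le_mul_of_nonneg_left h2 hM
      simp only [F] at h1 ⊢
      nlinarith [h1, h3]
    linarith
  have hψh_abs : ∀ x y, |ψh x - ψh y| ≤ M * ‖x - y‖ := by
    intro x y
    rw [abs_sub_le_iff]
    constructor
    · have := hψh_lip x y; linarith
    · have := hψh_lip y x; rw [norm_sub_rev] at this; linarith
  have hψh_cont : Continuous ψh := by
    have : LipschitzWith (Real.toNNReal M) ψh := by
      refine LipschitzWith.of_dist_le_mul fun x y => ?_
      rw [Real.dist_eq, dist_eq_norm, Real.coe_toNNReal M hM]
      exact hψh_abs x y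
    exact this.continuous
  -- ψh is convex on univ
  have hψh_conv : ConvexOn ℝ Set.univ ψh := by
    refine ⟨convex_univ, fun x _ y _ t s ht hs hts => ?_⟩
    have key : ∀ ε > (0:ℝ), ψh (t • x + s • y) - ε ≤ t * ψh x + s * ψh y := by
      intro ε hε
      obtain ⟨u, hu⟩ := exists_lt_of_ciInf_lt (show ψh x < ψh x + ε / 2 by linarith)
      obtain ⟨v, hv⟩ := exists_lt_of_ciInf_lt (show ψh y < ψh y + ε / 2 by linarith)
      have hw : t • (u : EuclideanSpace ℝ (Fin n)) + s • (v : EuclideanSpace ℝ (Fin n)) ∈ D₁ :=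
        hD₁conv u.2 v.2 ht hs hts
      have step1 : ψh (t • x + s • y) ≤
          ψ (t • (u : EuclideanSpace ℝ (Fin n)) + s • (v : EuclideanSpace ℝ (Fin n)))
            + M * ‖(t • x + s • y) - (t • (u : EuclideanSpace ℝ (Fin n)) + s • (v : EuclideanSpace ℝ (Fin n)))‖ :=
        hψh_le _ ⟨_, hw⟩
      have hψconv := hψ_conv.2 u.2 v.2 ht hs hts
      have hnorm : ‖(t • x + s • y) - (t • (u : EuclideanSpace ℝ (Fin n)) + s • (v : EuclideanSpace ℝ (Fin n)))‖
          ≤ t * ‖x - u‖ + s * ‖y - v‖ := by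
        have heq : (t • x + s • y) - (t • (u : EuclideanSpace ℝ (Fin n)) + s • (v : EuclideanSpace ℝ (Fin n)))
            = t • (x - (u : EuclideanSpace ℝ (Fin n))) + s • (y - (v : EuclideanSpace ℝ (Fin n))) := by
          rw [smul_sub, smul_sub]; abel
        rw [heq]
        calc ‖t • (x - (u : EuclideanSpace ℝ (Fin n))) + s • (y - (v : EuclideanSpace ℝ (Fin n)))‖
            ≤ ‖t • (x - (u : EuclideanSpace ℝ (Fin n)))‖ + ‖s • (y - (v : EuclideanSpace ℝ (Fin n)))‖ :=
              norm_add_le _ _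
          _ = t * ‖x - u‖ + s * ‖y - v‖ := by
              rw [norm_smul, norm_smul, Real.norm_eq_abs, Real.norm_eq_abs,
                abs_of_nonneg ht, abs_of_nonneg hs]
      have hMnorm : M * ‖(t • x + s • y) - (t • (u : EuclideanSpace ℝ (Fin n)) + s • (v : EuclideanSpace ℝ (Fin n)))‖
          ≤ M * (t * ‖x - u‖ + s * ‖y - v‖) := mul_le_mul_of_nonneg_left hnorm hM
      have hu' : ψ u + M * ‖x - (u : EuclideanSpace ℝ (Fin n))‖ ≤ ψh x + ε / 2 := le_of_lt hu
      have hv' : ψ v + M * ‖y - (v : EuclideanSpace ℝ (Fin n))‖ ≤ ψh y + ε / 2 := le_of_lt hv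
      have htu := mul_le_mul_of_nonneg_left hu' ht
      have htv := mul_le_mul_of_nonneg_left hv' hs
      simp only [smul_eq_mul] at hψconv ⊢
      nlinarith [step1, hψconv, hMnorm, htu, htv]
    have h2 : ψh (t • x + s • y) ≤ t * ψh x + s * ψh y := by
      refine le_of_forall_sub_le fun ε hε => ?_
      linarith [key ε hε]
    simpa [smul_eq_mul] using h2
  -- the translated set K and its gauge
  set z := x₀ with hz
  have hzD₂ : z ∈ interior D₂ := htop hx₀D₁
  set K : Set (EuclideanSpace ℝ (Fin n)) := (fun y => -z + y) '' D₂ with hKdef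
  have hKconv : Convex ℝ K := hD₂conv.translate (-z)
  have hKeq : K = (Homeomorph.addLeft (-z)) '' D₂ := rfl
  have hKint : interior K = (fun y => -z + y) '' interior D₂ := by
    rw [hKeq, ← Homeomorph.image_interior]; rfl
  have h0K : (0 : EuclideanSpace ℝ (Fin n)) ∈ interior K := by
    rw [hKint]; exact ⟨z, hzD₂, by simp⟩
  have hKnhds : K ∈ nhds (0 : EuclideanSpace ℝ (Fin n)) := mem_interior_iff_mem_nhds.1 h0K
  have hsub : ∀ x : EuclideanSpace ℝ (Fin n), -z + x = x - z := fun x => by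
    rw [sub_eq_neg_add]
  have hmemi : ∀ x ∈ interior D₂, x - z ∈ interior K := by
    intro x hx; rw [hKint]; exact ⟨x, hx, hsub x⟩
  set g : EuclideanSpace ℝ (Fin n) → ℝ := fun x => gauge K (x - z) with hgdef
  have hKfront : ∀ x ∈ frontier D₂, g x = 1 := by
    intro x hx
    rw [hgdef]
    rw [gauge_eq_one_iff_mem_frontier hKconv hKnhds, hKeq, ← Homeomorph.image_frontier]
    exact ⟨x, hx, hsub x⟩
  obtain ⟨r, hr0, hball⟩ := Metric.mem_nhds_iff.1 hKnhds
  set r' : NNReal := ⟨r, hr0.le⟩ with hr'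
  have hglipW : LipschitzWith r'⁻¹ (gauge K) := hKconv.lipschitzWith_gauge (by
    exact NNReal.coe_pos.1 (by exact hr0)) (by exact hball)
  have hglip : ∀ x y, |g x - g y| ≤ r⁻¹ * ‖x - y‖ := by
    intro x y
    have := hglipW.dist_le_mul (x - z) (y - z)
    rw [Real.dist_eq, dist_eq_norm] at this
    have heq : (x - z) - (y - z) = x - y := by abel
    rw [heq] at this
    simp only [NNReal.coe_inv] at this; exact this
  have hgcont : Continuous g := (continuous_gauge hKconv hKnhds).comp (continuous_id.sub continuous_const)
  have hgconv : ConvexOn ℝ Set.univ g := by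
    refine ⟨convex_univ, fun x _ y _ t s ht hs hts => ?_⟩
    have h1 : (t • x + s • y) - z = t • (x - z) + s • (y - z) := by
      calc (t • x + s • y) - z = (t • x + s • y) - (t + s) • z := by rw [hts, one_smul]
        _ = t • (x - z) + s • (y - z) := by rw [add_smul, smul_sub, smul_sub]; abel
    simp only [hgdef, smul_eq_mul]
    rw [h1]
    calc gauge K (t • (x - z) + s • (y - z))
        ≤ gauge K (t • (x - z)) + gauge K (s • (y - z)) :=
          gauge_add_le hKconv (absorbent_nhds_zero hKnhds) _ _
      _ = t * gauge K (x - z) + s * gauge K (y - z) := by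
          rw [gauge_smul_of_nonneg ht, gauge_smul_of_nonneg hs, smul_eq_mul, smul_eq_mul]
  -- θ : max of g on D₁, strictly below 1
  obtain ⟨w, hwD₁, hwmax⟩ := hD₁cpt.exists_isMaxOn hD₁ne hgcont.continuousOn
  set θ : ℝ := g w with hθ
  have hwmax' : ∀ x ∈ D₁, g x ≤ θ := fun x hx => hwmax hx
  have hθ1 : θ < 1 := by
    rw [hθ, hgdef]
    exact (gauge_lt_one_iff_mem_interior hKconv hKnhds).2 (hmemi w (htop hwD₁))
  -- C : max of ψh on D₂ ; m : min of ψh on D₁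
  obtain ⟨p, hpD₂, hpmax⟩ := hD₂cpt.exists_isMaxOn ⟨x₀, hD₁sub₂ hx₀D₁⟩ hψh_cont.continuousOn
  set C : ℝ := ψh p with hC
  have hpmax' : ∀ x ∈ D₂, ψh x ≤ C := fun x hx => hpmax hx
  obtain ⟨q, hqD₁, hqmin⟩ := hD₁cpt.exists_isMinOn hD₁ne hψh_cont.continuousOn
  set m : ℝ := ψh q with hm
  have hqmin' : ∀ x ∈ D₁, m ≤ ψh x := fun x hx => hqmin hx
  have hmC : m ≤ C := hpmax' q (hD₁sub₂ hqD₁)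
  set a : ℝ := (C - m) / (1 - θ) with ha
  have ha0 : 0 ≤ a := div_nonneg (by linarith) (by linarith)
  set h : EuclideanSpace ℝ (Fin n) → ℝ := fun x => a * (g x - 1) + C with hh
  have hhle : ∀ x ∈ D₁, h x ≤ ψh x := by
    intro x hx
    have h1 : g x ≤ θ := hwmax' x hx
    have h2 : a * (g x - 1) ≤ a * (θ - 1) :=
      mul_le_mul_of_nonneg_left (by linarith) ha0
    have hne : (1:ℝ) - θ ≠ 0 := sub_ne_zero.2 (by linarith)
    have h3 : a * (θ - 1) = -(C - m) := by
      rw [ha]; field_simp; ring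
    have h4 : m ≤ ψh x := hqmin' x hx
    simp only [hh]; linarith
  refine ⟨fun x => max (ψh x) (h x), ?_, ?_, ⟨C, ?_⟩, ⟨M + a * r⁻¹, ?_, ?_⟩⟩
  · -- convexity on D₂
    have hψhD₂ : ConvexOn ℝ D₂ ψh := hψh_conv.subset (Set.subset_univ _) hD₂conv
    have hhconv : ConvexOn ℝ D₂ h := by
      have heq : h = fun x => a * g x + (C - a) := by funext x; simp only [hh]; ring
      rw [heq]
      have h1 : ConvexOn ℝ Set.univ (fun x => a • g x) := hgconv.smul ha0
      have h2 : ConvexOn ℝ Set.univ (fun _ : EuclideanSpace ℝ (Fin n) => (C - a : ℝ)) :=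
        convexOn_const _ convex_univ
      have h3 : ConvexOn ℝ Set.univ (fun x => a • g x + (C - a)) := h1.add h2
      have h4 : ConvexOn ℝ Set.univ (fun x => a * g x + (C - a)) := by
        simpa [smul_eq_mul] using h3
      exact h4.subset (Set.subset_univ _) hD₂conv
    exact hψhD₂.sup hhconv
  · -- agrees with ψ on D₁
    intro x hx
    show max (ψh x) (h x) = ψ x
    rw [max_eq_left (hhle x hx), hψh_eq x hx]
  · -- constant on frontier D₂
    intro x hx
    have hxD₂ : x ∈ D₂ := hD₂cpt.isClosed.frontier_subset hx
    have h1 : h x = C := by simp only [hh]; rw [hKfront x hx]; ring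
    show max (ψh x) (h x) = C
    rw [h1, max_eq_right (h1.symm ▸ hpmax' x hxD₂)]
  · positivity
  · -- Lipschitz bound
    intro u hu v hv
    have h1 : |ψh v - ψh u| ≤ M * ‖v - u‖ := hψh_abs v u
    have h2 : |h v - h u| ≤ (a * r⁻¹) * ‖v - u‖ := by
      have : h v - h u = a * (g v - g u) := by simp only [hh]; ring
      rw [this, abs_mul, abs_of_nonneg ha0]
      have := hglip v u
      calc a * |g v - g u| ≤ a * (r⁻¹ * ‖v - u‖) := mul_le_mul_of_nonneg_left this ha0
        _ = (a * r⁻¹) * ‖v - u‖ := by ring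
    have h3 := abs_max_sub_max_le_max (ψh v) (h v) (ψh u) (h u)
    have hnn : (0:ℝ) ≤ ‖v - u‖ := norm_nonneg _
    have hra : (0:ℝ) ≤ a * r⁻¹ := mul_nonneg ha0 (inv_nonneg.2 hr0.le)
    have h4 : M * ‖v - u‖ ≤ (M + a * r⁻¹) * ‖v - u‖ := by nlinarith [mul_nonneg hra hnn]
    have h5 : (a * r⁻¹) * ‖v - u‖ ≤ (M + a * r⁻¹) * ‖v - u‖ := by nlinarith [mul_nonneg hM hnn]
    calc |max (ψh v) (h v) - max (ψh u) (h u)| ≤ max |ψh v - ψh u| |h v - h u| := h3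
      _ ≤ (M + a * r⁻¹) * ‖v - u‖ := max_le (h1.trans h4) (h2.trans h5)
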